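/- arXiv:2312.12782 — 4 statements merged into one kernel-verified Lean document; each statement's English description precedes it below -/
import Mathlib

section
/- Suppose α_t ≤ (1 - ρ)/2 where ρ = ‖S‖ < 1, and suppose for all nonzero f ∈ L²₀(M₁): t(1 - ⟨f, Ŝf⟩/‖f‖²) ≥ 1 - ⟨f, Sf⟩/‖f‖² - α_t. Then for all f ∈ L²₀(M₁), ⟨f, (I - Ŝ) f⟩ ≥ ⟨f, (I - S) f⟩ / (2t). -/
open scoped RealInnerProductSpace

/-- If `α_t ≤ (1 - ‖S‖)/2` with `‖S‖ < 1`, and the quadratic-form gap inequality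
`t(1 - ⟪f, Ŝf⟫/‖f‖²) ≥ 1 - ⟪f, Sf⟫/‖f‖² - α_t` holds for all nonzero `f`, then
`⟪f, (I - Ŝ) f⟫ ≥ ⟪f, (I - S) f⟫ / (2t)` for all `f`. -/
theorem hybrid_da_quadratic_form_bound {H : Type*} [NormedAddCommGroup H]
    [InnerProductSpace ℝ H] [CompleteSpace H] (S Shat : H →L[ℝ] H)
    (hS : IsSelfAdjoint S) (hShat : IsSelfAdjoint Shat)
    (hSnorm : ‖S‖ < 1) (hShatnorm : ‖Shat‖ ≤ 1)
    (t : ℕ) (ht : 0 < t) (α : ℝ) (hα₀ : α ∈ Set.Icc (0 : ℝ) 1)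
    (hα : α ≤ (1 - ‖S‖) / 2)
    (hyp : ∀ f : H, f ≠ 0 →
      (t : ℝ) * (1 - ⟪f, Shat f⟫ / ‖f‖ ^ 2) ≥ 1 - ⟪f, S f⟫ / ‖f‖ ^ 2 - α) :
    ∀ f : H, ⟪f, ((1 : H →L[ℝ] H) - Shat) f⟫ ≥ ⟪f, ((1 : H →L[ℝ] H) - S) f⟫ / (2 * t) := by
  intro f
  by_cases hf : f = 0
  · simp [hf]
  · have hf0 : ‖f‖ ≠ 0 := norm_ne_zero_iff.mpr hf
    have hnf : (0:ℝ) < ‖f‖ ^ 2 := by positivity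
    have ht' : (0:ℝ) < (t:ℝ) := by exact_mod_cast ht
    set s := ⟪f, S f⟫ / ‖f‖ ^ 2 with hs
    set sh := ⟪f, Shat f⟫ / ‖f‖ ^ 2 with hsh
    have h1 : (t : ℝ) * (1 - sh) ≥ 1 - s - α := hyp f hf
    have hcs : ⟪f, S f⟫ ≤ ‖S‖ * ‖f‖ ^ 2 := by
      calc ⟪f, S f⟫ ≤ ‖f‖ * ‖S f‖ := real_inner_le_norm f (S f)
        _ ≤ ‖f‖ * (‖S‖ * ‖f‖) := by
            exact mul_le_mul_of_nonneg_left (S.le_opNorm f) (norm_nonneg f)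
        _ = ‖S‖ * ‖f‖ ^ 2 := by ring
    have hsle : s ≤ ‖S‖ := by
      rw [hs, div_le_iff₀ hnf]; linarith
    have h2 : 1 - s - α ≥ (1 - s) / 2 := by linarith
    have h3 : 1 - sh ≥ (1 - s) / (2 * t) := by
      rw [ge_iff_le, div_le_iff₀ (by positivity)]
      nlinarith
    have hI : ⟪f, ((1 : H →L[ℝ] H) - Shat) f⟫ = ‖f‖ ^ 2 * (1 - sh) := by
      simp [ContinuousLinearMap.sub_apply, inner_sub_right, hsh,
        real_inner_self_eq_norm_sq]
      field_simp
    have hI2 : ⟪f, ((1 : H →L[ℝ] H) - S) f⟫ = ‖f‖ ^ 2 * (1 - s) := by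
      simp [ContinuousLinearMap.sub_apply, inner_sub_right, hs,
        real_inner_self_eq_norm_sq]
      field_simp
    rw [hI, hI2, ge_iff_le, div_le_iff₀ (by positivity)]
    nlinarith [h3, mul_le_mul_of_nonneg_left h3 hnf.le]
end

section
/- Let γ : (0, M) → [0, 1] be measurable on a bounded interval (0, M), with γ(z) < 1 for almost every z, and γ(z) ≤ γ₀ < 1 for all z ∈ (0, ε] for some ε > 0. Define β_t = sup_{m ∈ (0, M)} [ (1/m) ∫₀^m γ(z)^{2t} dz ]^{1/2}. Then β_t → 0 as t → ∞. -/
open MeasureTheory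

/-- If `γ : (0,M) → [0,1]` satisfies `γ < 1` a.e. and `γ ≤ γ₀ < 1` on `(0, ε]`, then
`β_t = sup_{m ∈ (0,M)} [(1/m)∫₀^m γ^{2t}]^{1/2} → 0` as `t → ∞`. -/
theorem beta_t_tendsto_zero (M : ℝ) (hM : 0 < M) (γ : ℝ → ℝ) (hmeas : Measurable γ)
    (hrange : ∀ z ∈ Set.Ioo (0 : ℝ) M, γ z ∈ Set.Icc (0 : ℝ) 1)
    (hae : ∀ᵐ z ∂(volume.restrict (Set.Ioo (0 : ℝ) M)), γ z < 1)
    (γ₀ ε : ℝ) (hγ₀ : γ₀ < 1) (hε : 0 < ε)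
    (hsmall : ∀ z ∈ Set.Ioc (0 : ℝ) ε, γ z ≤ γ₀) :
    Filter.Tendsto
      (fun t : ℕ => ⨆ m : Set.Ioo (0 : ℝ) M,
        Real.sqrt ((1 / (m : ℝ)) * ∫ z in Set.Ioo (0 : ℝ) (m : ℝ), γ z ^ (2 * t)))
      Filter.atTop (nhds 0) := by
  classical
  set c : ℝ := max γ₀ 0 with hc
  have hc1 : c < 1 := max_lt hγ₀ one_pos
  have hc0 : 0 ≤ c := le_max_right _ _
  set ε' : ℝ := min ε M with hε'
  have hε'0 : 0 < ε' := lt_min hε hM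
  have hpow_nonneg : ∀ (t : ℕ) (z : ℝ), 0 ≤ γ z ^ (2 * t) := fun t z =>
    Even.pow_nonneg (even_two_mul t) _
  have h2t : Filter.Tendsto (fun t : ℕ => 2 * t) Filter.atTop Filter.atTop :=
    Filter.tendsto_atTop_mono (fun t => Nat.le_mul_of_pos_left t two_pos) Filter.tendsto_id
  have hint : ∀ t : ℕ, IntegrableOn (fun z => γ z ^ (2 * t)) (Set.Ioo (0 : ℝ) M) := by
    intro t
    apply Integrable.mono' (integrable_const 1) (hmeas.pow_const _).aestronglyMeasurable
    filter_upwards [ae_restrict_mem measurableSet_Ioo] with z hz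
    have hz' := hrange z hz
    rw [Real.norm_eq_abs, abs_of_nonneg (hpow_nonneg t z)]
    exact pow_le_one₀ hz'.1 hz'.2
  set A : ℕ → ℝ := fun t => ∫ z in Set.Ioo (0 : ℝ) M, γ z ^ (2 * t) with hAdef
  have hA : Filter.Tendsto A Filter.atTop (nhds 0) := by
    have h := MeasureTheory.tendsto_integral_of_dominated_convergence
      (μ := volume.restrict (Set.Ioo (0 : ℝ) M))
      (F := fun t z => γ z ^ (2 * t)) (f := fun _ => (0 : ℝ)) (bound := fun _ => 1)
      (fun t => (hmeas.pow_const _).aestronglyMeasurable)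
      (integrable_const 1)
      (by
        intro t
        filter_upwards [ae_restrict_mem measurableSet_Ioo] with z hz
        have hz' := hrange z hz
        rw [Real.norm_eq_abs, abs_of_nonneg (hpow_nonneg t z)]
        exact pow_le_one₀ hz'.1 hz'.2)
      (by
        filter_upwards [hae, ae_restrict_mem measurableSet_Ioo] with z h1 h2
        have habs : |γ z| < 1 := abs_lt.2 ⟨by linarith [(hrange z h2).1], h1⟩
        exact (tendsto_pow_atTop_nhds_zero_of_abs_lt_one habs).comp h2t)
    simpa using h
  set B : ℕ → ℝ := fun t => max (c ^ (2 * t)) ((1 / ε') * A t) with hBdef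
  have hB : Filter.Tendsto B Filter.atTop (nhds 0) := by
    have h1 : Filter.Tendsto (fun t : ℕ => c ^ (2 * t)) Filter.atTop (nhds 0) :=
      (tendsto_pow_atTop_nhds_zero_of_abs_lt_one (by rwa [abs_of_nonneg hc0])).comp h2t
    have h2 := hA.const_mul (1 / ε')
    rw [mul_zero] at h2
    have h3 := h1.max h2
    rwa [max_self] at h3
  have hbound : ∀ t : ℕ, ∀ m ∈ Set.Ioo (0 : ℝ) M,
      (1 / m) * (∫ z in Set.Ioo (0 : ℝ) m, γ z ^ (2 * t)) ≤ B t := by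
    intro t m hm
    have hm0 : 0 < m := hm.1
    have hsub : Set.Ioo (0 : ℝ) m ⊆ Set.Ioo 0 M := Set.Ioo_subset_Ioo le_rfl hm.2.le
    have hintm : IntegrableOn (fun z => γ z ^ (2 * t)) (Set.Ioo (0 : ℝ) m) :=
      (hint t).mono_set hsub
    have hInonneg : 0 ≤ ∫ z in Set.Ioo (0 : ℝ) m, γ z ^ (2 * t) :=
      setIntegral_nonneg measurableSet_Ioo fun z _ => hpow_nonneg t z
    rcases le_or_gt m ε' with h | h
    · have hIb : (∫ z in Set.Ioo (0 : ℝ) m, γ z ^ (2 * t))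
          ≤ ∫ _z in Set.Ioo (0 : ℝ) m, c ^ (2 * t) := by
        apply setIntegral_mono_on hintm (integrableOn_const measure_Ioo_lt_top.ne)
          measurableSet_Ioo
        intro z hz
        have hzγ := hrange z (hsub hz)
        have hzc : γ z ≤ c :=
          le_trans (hsmall z ⟨hz.1, hz.2.le.trans (h.trans (min_le_left _ _))⟩)
            (le_max_left _ _)
        exact pow_le_pow_left₀ hzγ.1 hzc _
      have hconst : (∫ _z in Set.Ioo (0 : ℝ) m, c ^ (2 * t)) = m * c ^ (2 * t) := by
        rw [setIntegral_const, measureReal_def, Real.volume_Ioo, sub_zero, ENNReal.toReal_ofReal hm0.le,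
          smul_eq_mul]
      calc (1 / m) * (∫ z in Set.Ioo (0 : ℝ) m, γ z ^ (2 * t))
          ≤ (1 / m) * (m * c ^ (2 * t)) := by
            exact mul_le_mul_of_nonneg_left (hIb.trans_eq hconst) (by positivity)
        _ = c ^ (2 * t) := by field_simp
        _ ≤ B t := le_max_left _ _
    · have hIb : (∫ z in Set.Ioo (0 : ℝ) m, γ z ^ (2 * t)) ≤ A t :=
        setIntegral_mono_set (hint t) (Filter.Eventually.of_forall fun z => hpow_nonneg t z)
          (HasSubset.Subset.eventuallyLE hsub)
      have h1m : 1 / m ≤ 1 / ε' := one_div_le_one_div_of_le hε'0 h.le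
      calc (1 / m) * (∫ z in Set.Ioo (0 : ℝ) m, γ z ^ (2 * t))
          ≤ (1 / ε') * A t := mul_le_mul h1m hIb hInonneg (by positivity)
        _ ≤ B t := le_max_right _ _
  have hne : Nonempty (Set.Ioo (0 : ℝ) M) := (Set.nonempty_Ioo.2 hM).to_subtype
  have hsB : Filter.Tendsto (fun t => Real.sqrt (B t)) Filter.atTop (nhds 0) := by
    have := (Real.continuous_sqrt.tendsto 0).comp hB
    simpa [Function.comp_def] using this
  apply squeeze_zero (g := fun t => Real.sqrt (B t))
  · intro t
    exact Real.iSup_nonneg fun m => Real.sqrt_nonneg _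
  · intro t
    exact ciSup_le fun m => Real.sqrt_le_sqrt (hbound t m m.2)
  · exact hsB
end

section
/- Let V : H₁ → H₂ be a bounded linear map between Hilbert spaces with adjoint V*, and suppose ⟨Vf, Vf⟩_{H₂} = ⟨f, f⟩_{H₁} for all f ∈ H₁ (V is an isometry). Let Q be a bounded self-adjoint operator on H₂, and let t be a positive integer. If t is even or Q is positive semi-definite, then for all nonzero f ∈ H₁: 0 ≤ (⟨f, V*QV f⟩_{H₁}/‖f‖²)^t ≤ ⟨f, V*Q^tV f⟩_{H₁}/‖f‖². -/
open scoped RealInnerProductSpace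

section aux
variable {H : Type*} [NormedAddCommGroup H] [InnerProductSpace ℝ H] [CompleteSpace H]

/-- Cauchy–Schwarz for the PSD bilinear form `(u, v) ↦ ⟪u, Q v⟫`. -/
lemma form_cauchy_schwarz (Q : H →L[ℝ] H) (hQ : IsSelfAdjoint Q)
    (hpos : ∀ g : H, 0 ≤ ⟪g, Q g⟫) (u v : H) :
    ⟪u, Q v⟫ ^ 2 ≤ ⟪u, Q u⟫ * ⟪v, Q v⟫ := by
  have hsym := ContinuousLinearMap.isSelfAdjoint_iff_isSymmetric.mp hQ
  have key : ∀ x : ℝ, 0 ≤ ⟪v, Q v⟫ * (x * x) + (2 * ⟪u, Q v⟫) * x + ⟪u, Q u⟫ := by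
    intro x
    have h0 := hpos (u + x • v)
    have hexp : ⟪u + x • v, Q (u + x • v)⟫
        = ⟪v, Q v⟫ * (x * x) + (2 * ⟪u, Q v⟫) * x + ⟪u, Q u⟫ := by
      have hvu : ⟪v, Q u⟫ = ⟪u, Q v⟫ := by
        rw [real_inner_comm]; exact (hsym u v)
      simp only [map_add, map_smul, inner_add_add_self, inner_add_left, inner_add_right,
        real_inner_smul_left, real_inner_smul_right]
      rw [hvu]; ring
    linarith [hexp ▸ h0]
  have hd := discrim_le_zero key
  rw [discrim] at hd
  nlinarith [hd]

/-- Moments `a k = ⟪g, Q^k g⟫`. -/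
lemma moment_split (Q : H →L[ℝ] H) (hQ : IsSelfAdjoint Q) (g : H) (m n : ℕ) :
    ⟪g, (Q ^ (m + n)) g⟫ = ⟪(Q ^ m) g, (Q ^ n) g⟫ := by
  have hsym := ContinuousLinearMap.isSelfAdjoint_iff_isSymmetric.mp (hQ.pow m)
  rw [pow_add, ContinuousLinearMap.mul_apply]
  exact (hsym g ((Q ^ n) g)).symm

/-- Jensen for a positive self-adjoint operator on a unit vector. -/
lemma jensen_pos (Q : H →L[ℝ] H) (hQ : IsSelfAdjoint Q)
    (hpos : ∀ g : H, 0 ≤ ⟪g, Q g⟫) (g : H) (hg : ‖g‖ = 1) (t : ℕ) :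
    ⟪g, Q g⟫ ^ t ≤ ⟪g, (Q ^ t) g⟫ := by
  set a : ℕ → ℝ := fun k => ⟪g, (Q ^ k) g⟫ with ha
  have ha0 : a 0 = 1 := by
    simp [ha, real_inner_self_eq_norm_sq, hg]
  have hsucc : ∀ k, (Q ^ (k + 1)) g = Q ((Q ^ k) g) := by
    intro k; rw [pow_succ']; rfl
  have hnn : ∀ k, 0 ≤ a k := by
    intro k
    rcases Nat.even_or_odd k with ⟨i, hi⟩ | ⟨i, hi⟩
    · have : a k = ⟪(Q ^ i) g, (Q ^ i) g⟫ := by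
        rw [ha]; simp only []; rw [show k = i + i by omega, moment_split Q hQ]
      rw [this]; exact real_inner_self_nonneg
    · have : a k = ⟪(Q ^ i) g, Q ((Q ^ i) g)⟫ := by
        rw [ha]; simp only []
        rw [show k = i + (i + 1) by omega, moment_split Q hQ, hsucc]
      rw [this]; exact hpos _
  have hlc : ∀ m, a (m + 1) ^ 2 ≤ a m * a (m + 2) := by
    intro m
    rcases Nat.even_or_odd m with ⟨i, hi⟩ | ⟨i, hi⟩
    · -- m = 2i : plain Cauchy–Schwarz
      have h1 : a (m + 1) = ⟪(Q ^ i) g, (Q ^ (i + 1)) g⟫ := by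
        rw [ha]; simp only []; rw [show m + 1 = i + (i + 1) by omega, moment_split Q hQ]
      have h2 : a m = ⟪(Q ^ i) g, (Q ^ i) g⟫ := by
        rw [ha]; simp only []; rw [show m = i + i by omega, moment_split Q hQ]
      have h3 : a (m + 2) = ⟪(Q ^ (i + 1)) g, (Q ^ (i + 1)) g⟫ := by
        rw [ha]; simp only []; rw [show m + 2 = (i + 1) + (i + 1) by omega, moment_split Q hQ]
      have := real_inner_mul_inner_self_le ((Q ^ i) g) ((Q ^ (i + 1)) g)
      rw [h1, h2, h3]; nlinarith [this]
    · -- m = 2i+1 : form Cauchy–Schwarz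
      have h1 : a (m + 1) = ⟪(Q ^ i) g, Q ((Q ^ (i + 1)) g)⟫ := by
        rw [ha]; simp only []
        rw [show m + 1 = i + (i + 2) by omega, moment_split Q hQ, hsucc]
      have h2 : a m = ⟪(Q ^ i) g, Q ((Q ^ i) g)⟫ := by
        rw [ha]; simp only []
        rw [show m = i + (i + 1) by omega, moment_split Q hQ, hsucc]
      have h3 : a (m + 2) = ⟪(Q ^ (i + 1)) g, Q ((Q ^ (i + 1)) g)⟫ := by
        rw [ha]; simp only []
        rw [show m + 2 = (i + 1) + (i + 2) by omega, moment_split Q hQ, hsucc (i + 1)]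
      have := form_cauchy_schwarz Q hQ hpos ((Q ^ i) g) ((Q ^ (i + 1)) g)
      rw [h1, h2, h3]; nlinarith [this]
  -- now chain
  have hc : 0 ≤ a 1 := hnn 1
  rcases eq_or_lt_of_le hc with hc0 | hcpos
  · -- a 1 = 0
    cases t with
    | zero =>
      rw [pow_zero, pow_zero, ContinuousLinearMap.one_apply, real_inner_self_eq_norm_sq, hg]
      norm_num
    | succ n =>
      have : ⟪g, Q g⟫ = a 1 := by rw [ha]; simp [pow_one]
      rw [this, ← hc0, zero_pow (Nat.succ_ne_zero n)]
      exact hnn (n + 1)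
  · -- a 1 > 0
    have step : ∀ m, 0 < a m ∧ a 1 * a m ≤ a (m + 1) := by
      intro m
      induction m with
      | zero => exact ⟨by rw [ha0]; norm_num, by rw [ha0, mul_one]⟩
      | succ n ih =>
        obtain ⟨hpos_n, hstep_n⟩ := ih
        have hpos_n1 : 0 < a (n + 1) := lt_of_lt_of_le (by positivity) hstep_n
        refine ⟨hpos_n1, ?_⟩
        have h1 : a 1 * a (n + 1) * a n ≤ a (n + 1) * a (n + 1) := by
          nlinarith [hstep_n, hpos_n1.le]
        have h2 := hlc n
        have : a 1 * a (n + 1) * a n ≤ a n * a (n + 2) := by nlinarith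
        exact le_of_mul_le_mul_right (by nlinarith) hpos_n
    have hq1 : ⟪g, Q g⟫ = a 1 := by rw [ha]; simp [pow_one]
    rw [hq1]
    induction t with
    | zero => rw [pow_zero, ← ha0]
    | succ n ihn =>
      calc a 1 ^ (n + 1) = a 1 * a 1 ^ n := by ring
        _ ≤ a 1 * a n := by nlinarith [ihn, hcpos.le]
        _ ≤ a (n + 1) := (step n).2

/-- Jensen for self-adjoint `Q` on a unit vector, `t` even or `Q` positive. -/
lemma jensen_main (Q : H →L[ℝ] H) (hQ : IsSelfAdjoint Q) (t : ℕ)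
    (hcase : Even t ∨ ∀ g : H, 0 ≤ ⟪g, Q g⟫) (g : H) (hg : ‖g‖ = 1) :
    ⟪g, Q g⟫ ^ t ≤ ⟪g, (Q ^ t) g⟫ := by
  rcases hcase with ⟨s, hs⟩ | hpos
  · -- t = 2s : apply jensen_pos to Q²
    have ht2 : t = 2 * s := by omega
    have hQ2 : IsSelfAdjoint (Q ^ 2) := hQ.pow 2
    have hsym := ContinuousLinearMap.isSelfAdjoint_iff_isSymmetric.mp hQ
    have hpos2 : ∀ x : H, 0 ≤ ⟪x, (Q ^ 2) x⟫ := by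
      intro x
      have : ⟪x, (Q ^ 2) x⟫ = ⟪Q x, Q x⟫ := by
        rw [pow_two, ContinuousLinearMap.mul_apply]
        exact (hsym x (Q x)).symm
      rw [this]; exact real_inner_self_nonneg
    have key := jensen_pos (Q ^ 2) hQ2 hpos2 g hg s
    have hpowpow : ((Q ^ 2) ^ s) = Q ^ t := by rw [← pow_mul, ht2]
    have hcs : ⟪g, Q g⟫ ^ 2 ≤ ⟪g, (Q ^ 2) g⟫ := by
      have h1 : ⟪g, (Q ^ 2) g⟫ = ⟪Q g, Q g⟫ := by
        rw [pow_two, ContinuousLinearMap.mul_apply]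
        exact (hsym g (Q g)).symm
      have h2 := real_inner_mul_inner_self_le g (Q g)
      have h3 : (⟪g, g⟫ : ℝ) = 1 := by rw [real_inner_self_eq_norm_sq, hg]; norm_num
      rw [h1]; nlinarith [h2, h3]
    calc ⟪g, Q g⟫ ^ t = (⟪g, Q g⟫ ^ 2) ^ s := by rw [← pow_mul, ht2]
      _ ≤ ⟪g, (Q ^ 2) g⟫ ^ s := pow_le_pow_left₀ (sq_nonneg _) hcs s
      _ ≤ ⟪g, ((Q ^ 2) ^ s) g⟫ := key
      _ = ⟪g, (Q ^ t) g⟫ := by rw [hpowpow]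
  · exact jensen_pos Q hQ hpos g hg t

end aux
/-- Spectral-Jensen inequality conjugated by an isometry: for an isometric `V : H₁ → H₂`
with adjoint `V*`, a bounded self-adjoint `Q` on `H₂`, and a positive integer `t` that is
even or with `Q` positive semi-definite,
`0 ≤ (⟪f, V*QV f⟫/‖f‖²)^t ≤ ⟪f, V*QᵗV f⟫/‖f‖²` for all nonzero `f`. -/
theorem isometry_spectral_jensen {H₁ H₂ : Type*}
    [NormedAddCommGroup H₁] [InnerProductSpace ℝ H₁] [CompleteSpace H₁]
    [NormedAddCommGroup H₂] [InnerProductSpace ℝ H₂] [CompleteSpace H₂]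
    (V : H₁ →L[ℝ] H₂) (hV : ∀ f : H₁, ⟪V f, V f⟫ = ⟪f, f⟫)
    (Q : H₂ →L[ℝ] H₂) (hQ : IsSelfAdjoint Q)
    (t : ℕ) (ht : 0 < t) (hcase : Even t ∨ ∀ g : H₂, 0 ≤ ⟪g, Q g⟫) :
    ∀ f : H₁, f ≠ 0 →
      0 ≤ (⟪f, (ContinuousLinearMap.adjoint V) (Q (V f))⟫ / ‖f‖ ^ 2) ^ t ∧
        (⟪f, (ContinuousLinearMap.adjoint V) (Q (V f))⟫ / ‖f‖ ^ 2) ^ t ≤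
          ⟪f, (ContinuousLinearMap.adjoint V) ((Q ^ t) (V f))⟫ / ‖f‖ ^ 2 := by
  intro f hf
  have hnf : (0 : ℝ) < ‖f‖ := norm_pos_iff.mpr hf
  have hVf : ‖V f‖ = ‖f‖ := by
    have h := hV f
    rw [real_inner_self_eq_norm_sq, real_inner_self_eq_norm_sq] at h
    calc ‖V f‖ = Real.sqrt (‖V f‖ ^ 2) := (Real.sqrt_sq (norm_nonneg _)).symm
      _ = Real.sqrt (‖f‖ ^ 2) := by rw [h]
      _ = ‖f‖ := Real.sqrt_sq (norm_nonneg _)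
  have hne : ‖f‖ ≠ 0 := ne_of_gt hnf
  set g : H₂ := (‖f‖)⁻¹ • V f with hgdef
  have hg : ‖g‖ = 1 := by
    rw [hgdef, norm_smul, hVf]
    simp [abs_of_pos hnf, hne]
  have hadj1 : ⟪f, (ContinuousLinearMap.adjoint V) (Q (V f))⟫ = ⟪V f, Q (V f)⟫ :=
    ContinuousLinearMap.adjoint_inner_right V f (Q (V f))
  have hadj2 : ⟪f, (ContinuousLinearMap.adjoint V) ((Q ^ t) (V f))⟫ = ⟪V f, (Q ^ t) (V f)⟫ :=
    ContinuousLinearMap.adjoint_inner_right V f ((Q ^ t) (V f))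
  have key1 : ⟪g, Q g⟫ = ⟪V f, Q (V f)⟫ / ‖f‖ ^ 2 := by
    rw [hgdef, map_smul, real_inner_smul_left, real_inner_smul_right]
    field_simp
  have key2 : ⟪g, (Q ^ t) g⟫ = ⟪V f, (Q ^ t) (V f)⟫ / ‖f‖ ^ 2 := by
    rw [hgdef, map_smul, real_inner_smul_left, real_inner_smul_right]
    field_simp
  rw [hadj1, hadj2, ← key1, ← key2]
  constructor
  · rcases hcase with heven | hpos
    · exact heven.pow_nonneg _
    · exact pow_nonneg (hpos g) t
  · exact jensen_main Q hQ t hcase g hg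
end

section
/- Let v(z) = (1-z)^{d-1}/d! on (0,1) with d ≥ 2. Then v'(z) < 0 on (0,1), and the function z ↦ z v'(z)/v(z)^{1 - 1/k} is decreasing on (0,1) when k = d - 1. -/
/-- For `v(z) = (1-z)^{d-1}/d!` on `(0,1)` with `d ≥ 2`: `v' < 0` on `(0,1)`, and
`z ↦ z v'(z)/v(z)^{1 - 1/(d-1)}` is decreasing on `(0,1)`. -/
theorem slice_sampler_density_monotonicity (d : ℕ) (hd : 2 ≤ d) :
    (∀ z ∈ Set.Ioo (0 : ℝ) 1,
      deriv (fun z : ℝ => (1 - z) ^ (d - 1) / (d.factorial : ℝ)) z < 0) ∧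
    StrictAntiOn
      (fun z : ℝ =>
        z * deriv (fun z : ℝ => (1 - z) ^ (d - 1) / (d.factorial : ℝ)) z /
          ((1 - z) ^ (d - 1) / (d.factorial : ℝ)) ^ ((1 : ℝ) - 1 / ((d : ℝ) - 1)))
      (Set.Ioo (0 : ℝ) 1) := by
  set n := d - 1 with hn
  have hn1 : 1 ≤ n := by omega
  set c : ℝ := (d.factorial : ℝ) with hc
  have hcpos : 0 < c := by positivity
  have hcast : ((n : ℕ) : ℝ) = (d : ℝ) - 1 := by
    rw [hn]; push_cast [Nat.cast_sub (by omega : 1 ≤ d)]; ring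
  have hnR : (0 : ℝ) < (n : ℝ) := by exact_mod_cast hn1
  set E : ℝ := (1 : ℝ) - 1 / ((d : ℝ) - 1) with hE
  have hderiv : ∀ z : ℝ,
      deriv (fun z : ℝ => (1 - z) ^ n / c) z = -((n : ℝ) * (1 - z) ^ (n - 1)) / c := by
    intro z
    have h1 : HasDerivAt (fun z : ℝ => (1 : ℝ) - z) (-1) z := by
      simpa using (hasDerivAt_id z).const_sub 1
    have h2 : HasDerivAt (fun z : ℝ => (1 - z) ^ n / c) ((n : ℝ) * (1 - z) ^ (n - 1) * -1 / c) z :=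
      (h1.pow n).div_const c
    rw [h2.deriv]; ring
  constructor
  · intro z hz
    rw [hderiv]
    have hw : 0 < 1 - z := by linarith [hz.2]
    have : 0 < (n : ℝ) * (1 - z) ^ (n - 1) := by positivity
    exact div_neg_of_neg_of_pos (by linarith) hcpos
  · have key : ∀ z ∈ Set.Ioo (0 : ℝ) 1,
        z * deriv (fun z : ℝ => (1 - z) ^ n / c) z /
          ((1 - z) ^ n / c) ^ E = -((n : ℝ) * c ^ E / c) * z := by
      intro z hz
      have hw : 0 < 1 - z := by linarith [hz.2]
      have hw0 : (1 - z) ≠ 0 := ne_of_gt hw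
      have hcE : (0 : ℝ) < c ^ E := Real.rpow_pos_of_pos hcpos E
      have hpow : ((1 - z) ^ n / c) ^ E = (1 - z) ^ (n - 1) / c ^ E := by
        rw [Real.div_rpow (by positivity) hcpos.le]
        congr 1
        rw [← Real.rpow_natCast (1 - z) n, ← Real.rpow_mul hw.le]
        have : (n : ℝ) * E = ((n - 1 : ℕ) : ℝ) := by
          rw [hE, hcast.symm]
          push_cast [Nat.cast_sub hn1]
          field_simp
        rw [this, Real.rpow_natCast]
      rw [hderiv, hpow]
      have hwp : (1 - z) ^ (n - 1) ≠ 0 := pow_ne_zero _ hw0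
      field_simp
    intro x hx y hy hxy
    simp only
    rw [key x hx, key y hy]
    have hC : 0 < (n : ℝ) * c ^ E / c := by
      have := Real.rpow_pos_of_pos hcpos E
      positivity
    nlinarith
end
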